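/- Let k ≥ 3. Then r_0^(k) = 1, r_1^(k) = 0, r_j^(k) = 2^{j−2} for 2 ≤ j ≤ k, and for all n ≥ k+1, r_n^(k) = Σ_{h=2}^{k} (h−1)·r_{n−h}^(k) + Σ_{h=k+1}^{2k−2} (2k−h−1)·r_{n−h}^(k), where by convention r_j^(k) = 0 for j < 0. -/

import Mathlib

/-- A binary string (list of booleans, `false` = 0, `true` = 1) avoids `0^k`
and `1^k`, i.e. it contains neither `k` consecutive 0's nor `k` consecutive 1's. -/
def Avoids (k : ℕ) (s : List Bool) : Prop :=
  ¬ (List.replicate k false <:+: s) ∧ ¬ (List.replicate k true <:+: s)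
/-- `rcount k n = r_n^(k)`: the number of binary strings of length `n` starting
with 0, ending with 1 and avoiding `0^k` and `1^k` (the empty string counts,
so `rcount k 0 = 1`). -/
noncomputable def rcount (k n : ℕ) : ℕ :=
  Set.ncard {s : List Bool | s.length = n ∧ Avoids k s ∧
    s.head? ≠ some true ∧ s.getLast? ≠ some false}
/-- `r_n^(k)` extended to integer indices by the convention `r_j^(k) = 0` for `j < 0`. -/
noncomputable def rZ (k : ℕ) (n : ℤ) : ℤ :=
  if n < 0 then 0 else rcount k n.toNat

open List Finset

section Aux

lemma infix_neg' {k m : ℕ} {c : Bool} {t : List Bool} (hk : 1 ≤ k)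
    (h : replicate k c <:+: replicate m (!c) ++ t) : replicate k c <:+: t := by
  induction m with
  | zero => simpa using h
  | succ m ih =>
    rw [replicate_succ, cons_append] at h
    rcases infix_cons_iff.mp h with hp | hi
    · exfalso
      obtain ⟨u, hu⟩ := hp
      obtain ⟨k', rfl⟩ := Nat.exists_eq_add_of_le hk
      rw [Nat.add_comm, replicate_succ, cons_append] at hu
      have : c = !c := by injection hu
      simp at this
    · exact ih hi

lemma prefix_bound' {j m : ℕ} {c : Bool} {t : List Bool} (ht : t.head? ≠ some c)
    (h : replicate j c <+: replicate m c ++ t) : j ≤ m := by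
  induction m generalizing j with
  | zero =>
    cases j with
    | zero => simp
    | succ j =>
      exfalso
      obtain ⟨u, hu⟩ := h
      rw [replicate_succ, cons_append] at hu
      apply ht
      simp only [replicate_zero, nil_append] at hu
      rw [← hu]
      simp
  | succ m ih =>
    cases j with
    | zero => simp
    | succ j =>
      rw [replicate_succ, replicate_succ, cons_append, cons_prefix_cons] at h
      exact Nat.succ_le_succ (ih h.2)

lemma infix_same' {k m : ℕ} {c : Bool} {t : List Bool} (hm : m < k) (ht : t.head? ≠ some c)
    (h : replicate k c <:+: replicate m c ++ t) : replicate k c <:+: t := by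
  induction m with
  | zero => simpa using h
  | succ m ih =>
    rw [replicate_succ, cons_append] at h
    rcases infix_cons_iff.mp h with hp | hi
    · exfalso
      have hb : k ≤ m + 1 := prefix_bound' (j := k) (m := m + 1) ht
        (by rw [replicate_succ, cons_append]; exact hp)
      omega
    · exact ih (by omega) hi

lemma avoids_infix {k : ℕ} {s t : List Bool} (h : Avoids k s) (ht : t <:+: s) : Avoids k t :=
  ⟨fun hh => h.1 (hh.trans ht), fun hh => h.2 (hh.trans ht)⟩

lemma avoids_append {k a b : ℕ} {t : List Bool} (hk : 3 ≤ k) (ha : a < k) (hb : b < k)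
    (hb1 : 1 ≤ b) (ht : t.head? ≠ some true) (hav : Avoids k t) :
    Avoids k (replicate a false ++ replicate b true ++ t) := by
  have hk1 : 1 ≤ k := by omega
  constructor
  · intro h
    rw [append_assoc] at h
    have h1 : replicate k false <:+: replicate b true ++ t := by
      refine infix_same' ha ?_ h
      cases b with
      | zero => omega
      | succ b => rw [replicate_succ, cons_append]; simp
    have h2 : replicate k false <:+: t := by
      have : (false : Bool) = !true := rfl
      rw [this] at h1 ⊢
      exact infix_neg' hk1 h1
    exact hav.1 h2
  · intro h
    rw [append_assoc] at h
    have h1 : replicate k true <:+: replicate b true ++ t := by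
      have : (true : Bool) = !false := rfl
      rw [this] at h ⊢
      exact infix_neg' hk1 h
    exact hav.2 (infix_same' hb ht h1)

/-- extract the maximal initial run -/
lemma run_decomp : ∀ (s : List Bool) (c : Bool), s.head? = some c →
    ∃ a t, 1 ≤ a ∧ s = replicate a c ++ t ∧ t.head? ≠ some c := by
  intro s
  induction s with
  | nil => intro c hc; simp at hc
  | cons x u ih =>
    intro c hc
    simp only [head?_cons, Option.some.injEq] at hc
    subst hc
    by_cases hu : u.head? = some x
    · obtain ⟨a, t, ha, hu', ht⟩ := ih x hu
      exact ⟨a + 1, t, by omega, by rw [replicate_succ, cons_append, hu'], ht⟩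
    · exact ⟨1, u, le_refl 1, by simp, hu⟩

/-- uniqueness of run decomposition -/
lemma run_unique : ∀ (a a' : ℕ) (c : Bool) (u u' : List Bool), u.head? ≠ some c →
    u'.head? ≠ some c → replicate a c ++ u = replicate a' c ++ u' → a = a' ∧ u = u' := by
  intro a
  induction a with
  | zero =>
    intro a' c u u' hu hu' he
    cases a' with
    | zero => simpa using he
    | succ a' =>
      exfalso
      apply hu
      rw [replicate_zero, nil_append] at he
      rw [he, replicate_succ, cons_append, head?_cons]
  | succ a ih =>
    intro a' c u u' hu hu' he
    cases a' with
    | zero =>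
      exfalso
      apply hu'
      rw [replicate_zero, nil_append] at he
      rw [← he, replicate_succ, cons_append, head?_cons]
    | succ a' =>
      rw [replicate_succ, replicate_succ, cons_append, cons_append, cons.injEq] at he
      obtain ⟨h1, h2⟩ := ih a' c u u' hu hu' he.2
      exact ⟨by omega, h2⟩

def SSet' (k n : ℕ) : Set (List Bool) :=
  {s | s.length = n ∧ Avoids k s ∧ s.head? ≠ some true ∧ s.getLast? ≠ some false}

lemma rc_eq (k n : ℕ) : rcount k n = (SSet' k n).ncard := rfl

lemma getLast?_replicate_succ' (m : ℕ) (c : Bool) :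
    (replicate (m + 1) c).getLast? = some c := by
  rw [replicate_succ', getLast?_concat]

lemma mem_decomp {k n : ℕ} (hk : 3 ≤ k) (hn : 1 ≤ n) (s : List Bool) :
    s ∈ SSet' k n ↔ ∃ a b t, 1 ≤ a ∧ a ≤ k - 1 ∧ 1 ≤ b ∧ b ≤ k - 1 ∧ a + b ≤ n ∧
      t ∈ SSet' k (n - a - b) ∧ s = replicate a false ++ replicate b true ++ t := by
  constructor
  · rintro ⟨hlen, hav, hhead, hlast⟩
    have hsne : s ≠ [] := by rintro rfl; simp at hlen; omega
    have hh : s.head? = some false := by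
      cases hh : s.head? with
      | none => exact absurd (head?_eq_none_iff.mp hh) hsne
      | some c => cases c with
        | false => rfl
        | true => exact absurd hh hhead
    obtain ⟨a, s₁, ha1, hs1, hs1h⟩ := run_decomp s false hh
    have hs₁ne : s₁ ≠ [] := by
      rintro rfl
      rw [append_nil] at hs1
      obtain ⟨m, rfl⟩ := Nat.exists_eq_add_of_le ha1
      apply hlast
      rw [hs1, Nat.add_comm, getLast?_replicate_succ']
    have hh1 : s₁.head? = some true := by
      cases hh1 : s₁.head? with
      | none => exact absurd (head?_eq_none_iff.mp hh1) hs₁ne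
      | some c => cases c with
        | false => exact absurd hh1 hs1h
        | true => rfl
    obtain ⟨b, t, hb1, hst, hth⟩ := run_decomp s₁ true hh1
    have hseq : s = replicate a false ++ replicate b true ++ t := by
      rw [hs1, hst, append_assoc]
    have hak : a ≤ k - 1 := by
      by_contra hc
      apply hav.1
      have : replicate a false = replicate k false ++ replicate (a - k) false := by
        rw [← replicate_add]; congr 1; omega
      exact ⟨[], replicate (a - k) false ++ replicate b true ++ t,
        by rw [hseq, this]; simp only [nil_append, append_assoc]⟩
    have hbk : b ≤ k - 1 := by
      by_contra hc
      apply hav.2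
      have : replicate b true = replicate k true ++ replicate (b - k) true := by
        rw [← replicate_add]; congr 1; omega
      exact ⟨replicate a false, replicate (b - k) true ++ t,
        by rw [hseq, this]; simp only [nil_append, append_assoc]⟩
    have hlen' : n = a + b + t.length := by
      rw [← hlen, hseq]; simp; omega
    refine ⟨a, b, t, ha1, hak, hb1, hbk, by omega, ⟨by omega, ?_, hth, ?_⟩, hseq⟩
    · exact avoids_infix hav ⟨replicate a false ++ replicate b true, [],
        by rw [hseq]; simp⟩
    · cases t with
      | nil => simp
      | cons x u =>
        intro hf
        apply hlast
        rw [hseq, append_assoc, getLast?_append, getLast?_append]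
        cases hg : (x :: u).getLast? with
        | none => simp at hg
        | some y => rw [hg] at hf; exact hf
  · rintro ⟨a, b, t, ha1, hak, hb1, hbk, hab, ⟨htlen, htav, hth, htl⟩, rfl⟩
    refine ⟨by simp; omega, avoids_append hk (by omega) (by omega) hb1 hth htav, ?_, ?_⟩
    · obtain ⟨m, rfl⟩ := Nat.exists_eq_add_of_le ha1
      rw [Nat.add_comm, replicate_succ]
      simp
    · rw [append_assoc, getLast?_append, getLast?_append]
      cases t with
      | nil =>
        obtain ⟨m, rfl⟩ := Nat.exists_eq_add_of_le hb1
        rw [Nat.add_comm]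
        simp [getLast?_replicate_succ']
      | cons x u =>
        cases hg : (x :: u).getLast? with
        | none => simp at hg
        | some y =>
          rw [hg] at htl
          simpa using htl

lemma sset_finite (k n : ℕ) : (SSet' k n).Finite :=
  (List.finite_length_eq Bool n).subset (fun _ hs => hs.1)

noncomputable def Sfin (k n : ℕ) : Finset (List Bool) := (sset_finite k n).toFinset

lemma rcount_eq_card (k n : ℕ) : rcount k n = (Sfin k n).card := by
  have h : rcount k n = (SSet' k n).ncard := rfl
  rw [h, Set.ncard_eq_toFinset_card (SSet' k n) (sset_finite k n)]
  rfl

lemma decomp_inj {a b a' b' : ℕ} {t t' : List Bool} (hb : 1 ≤ b) (hb' : 1 ≤ b')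
    (ht : t.head? ≠ some true) (ht' : t'.head? ≠ some true)
    (he : replicate a false ++ replicate b true ++ t
        = replicate a' false ++ replicate b' true ++ t') :
    a = a' ∧ b = b' ∧ t = t' := by
  have hhead : (replicate b true ++ t).head? ≠ some false := by
    obtain ⟨m, rfl⟩ := Nat.exists_eq_add_of_le hb
    rw [Nat.add_comm, replicate_succ, cons_append]
    simp
  have hhead' : (replicate b' true ++ t').head? ≠ some false := by
    obtain ⟨m, rfl⟩ := Nat.exists_eq_add_of_le hb'
    rw [Nat.add_comm, replicate_succ, cons_append]
    simp
  rw [append_assoc, append_assoc] at he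
  obtain ⟨h1, h2⟩ := run_unique a a' false _ _ hhead hhead' he
  obtain ⟨h3, h4⟩ := run_unique b b' true _ _ ht ht' h2
  exact ⟨h1, h3, h4⟩

noncomputable def Dset (k n : ℕ) : Finset (ℕ × ℕ) :=
  ((Finset.Icc 1 (k-1)) ×ˢ (Finset.Icc 1 (k-1))).filter (fun p => p.1 + p.2 ≤ n)

lemma head_of_mem {k n : ℕ} {t : List Bool} (h : t ∈ SSet' k n) : t.head? ≠ some true :=
  h.2.2.1

lemma rcount_rec {k n : ℕ} (hk : 3 ≤ k) (hn : 1 ≤ n) :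
    rcount k n = ∑ p ∈ Dset k n, rcount k (n - p.1 - p.2) := by
  have hbU : Sfin k n = (Dset k n).biUnion (fun p =>
      (Sfin k (n - p.1 - p.2)).image
        (fun t => replicate p.1 false ++ replicate p.2 true ++ t)) := by
    ext s
    simp only [Sfin, Set.Finite.mem_toFinset, Finset.mem_biUnion, Finset.mem_image,
      Dset, Finset.mem_filter, Finset.mem_product, Finset.mem_Icc]
    rw [mem_decomp hk hn]
    constructor
    · rintro ⟨a, b, t, h1, h2, h3, h4, h5, h6, rfl⟩
      exact ⟨(a, b), ⟨⟨⟨h1, h2⟩, h3, h4⟩, h5⟩, t, h6, rfl⟩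
    · rintro ⟨⟨a, b⟩, ⟨⟨⟨h1, h2⟩, h3, h4⟩, h5⟩, t, h6, rfl⟩
      exact ⟨a, b, t, h1, h2, h3, h4, h5, h6, rfl⟩
  rw [rcount_eq_card, hbU, Finset.card_biUnion]
  · refine Finset.sum_congr rfl (fun p _ => ?_)
    rw [Finset.card_image_of_injective, rcount_eq_card]
    intro t t' he
    exact append_cancel_left he
  · rintro ⟨a, b⟩ hp ⟨a', b'⟩ hq hne
    simp only [Finset.mem_coe, Dset, Finset.mem_filter, Finset.mem_product, Finset.mem_Icc] at hp hq
    rw [Function.onFun, Finset.disjoint_left]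
    rintro s hs hs'
    simp only [Finset.mem_image, Sfin, Set.Finite.mem_toFinset] at hs hs'
    obtain ⟨t, ht, rfl⟩ := hs
    obtain ⟨t', ht', he⟩ := hs'
    obtain ⟨h1, h2, h3⟩ := decomp_inj hp.1.2.1 hq.1.2.1 (head_of_mem ht) (head_of_mem ht')
      he.symm
    exact hne (by simp [h1, h2])

lemma rcount_zero {k : ℕ} (hk : 3 ≤ k) : rcount k 0 = 1 := by
  rw [rc_eq]
  have : SSet' k 0 = {[]} := by
    ext s
    simp only [SSet', Set.mem_setOf_eq, Set.mem_singleton_iff, length_eq_zero_iff]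
    constructor
    · tauto
    · rintro rfl
      refine ⟨rfl, ⟨?_, ?_⟩, by simp, by simp⟩ <;>
      · intro h
        have := h.sublist.length_le
        simp at this
        omega
  rw [this, Set.ncard_singleton]

lemma rcount_one {k : ℕ} (hk : 3 ≤ k) : rcount k 1 = 0 := by
  rw [rc_eq]
  have : SSet' k 1 = ∅ := by
    ext s
    simp only [SSet', Set.mem_setOf_eq, Set.mem_empty_iff_false, iff_false]
    rintro ⟨hlen, _, hh, hl⟩
    rw [length_eq_one_iff] at hlen
    obtain ⟨x, rfl⟩ := hlen
    cases x
    · exact hl (by simp)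
    · exact hh (by simp)
  rw [this, Set.ncard_empty]

lemma ncard_len : ∀ m : ℕ, {l : List Bool | l.length = m}.ncard = 2 ^ m := by
  intro m
  induction m with
  | zero =>
    have : {l : List Bool | l.length = 0} = {[]} := by
      ext l; simp [length_eq_zero_iff]
    rw [this, Set.ncard_singleton]; rfl
  | succ m ih =>
    have hinj : ∀ x : Bool, Function.Injective (fun l : List Bool => x :: l) := by
      intro x a b h; simpa using h
    have hsplit : {l : List Bool | l.length = m + 1} =
        (fun l => false :: l) '' {l : List Bool | l.length = m} ∪
        (fun l => true :: l) '' {l : List Bool | l.length = m} := by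
      ext l
      simp only [Set.mem_setOf_eq, Set.mem_union, Set.mem_image]
      constructor
      · intro hl
        cases l with
        | nil => simp at hl
        | cons x u =>
          cases x
          · exact Or.inl ⟨u, by simpa using hl, rfl⟩
          · exact Or.inr ⟨u, by simpa using hl, rfl⟩
      · rintro (⟨u, hu, rfl⟩ | ⟨u, hu, rfl⟩) <;> simp [hu]
    rw [hsplit, Set.ncard_union_eq ?dis ?f1 ?f2]
    case dis =>
      rw [Set.disjoint_left]
      rintro l ⟨u, _, rfl⟩ ⟨v, _, hv⟩
      simp at hv
    case f1 => exact ((List.finite_length_eq Bool m).image _)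
    case f2 => exact ((List.finite_length_eq Bool m).image _)
    rw [Set.ncard_image_of_injective _ (hinj false), Set.ncard_image_of_injective _ (hinj true),
      ih]
    ring

lemma rcount_small {k j : ℕ} (hk : 3 ≤ k) (h2 : 2 ≤ j) (hj : j ≤ k) :
    rcount k j = 2 ^ (j - 2) := by
  rw [rc_eq]
  have hset : SSet' k j = (fun u : List Bool => false :: (u ++ [true])) ''
      {l : List Bool | l.length = j - 2} := by
    ext s
    simp only [SSet', Set.mem_setOf_eq, Set.mem_image]
    constructor
    · rintro ⟨hlen, _, hh, hl⟩
      cases s with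
      | nil => simp at hlen; omega
      | cons x u =>
        have hune : u ≠ [] := by
          rintro rfl; simp at hlen; omega
        have hx : x = false := by
          cases x
          · rfl
          · exact absurd (by simp) hh
        have hu : u.dropLast ++ [u.getLast hune] = u := dropLast_append_getLast hune
        have hy : u.getLast hune = true := by
          by_contra hy
          apply hl
          have : x :: u = (x :: u.dropLast) ++ [u.getLast hune] := by
            rw [cons_append, hu]
          rw [this, getLast?_concat]
          cases hyy : u.getLast hune
          · rfl
          · exact absurd hyy hy
        refine ⟨u.dropLast, ?_, ?_⟩
        · simp only [Set.mem_setOf_eq, length_dropLast]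
          simp at hlen
          omega
        · rw [hx, ← hy, hu]
    · rintro ⟨u, hu, rfl⟩
      have hu : u.length = j - 2 := hu
      have hlen : (false :: (u ++ [true])).length = j := by simp; omega
      refine ⟨hlen, ⟨?_, ?_⟩, by simp, ?_⟩
      · intro h
        have h1 := h.sublist.length_le
        simp only [length_replicate] at h1
        rw [hlen] at h1
        have hjk : j = k := le_antisymm hj h1
        have heq : replicate k false = false :: (u ++ [true]) :=
          h.sublist.eq_of_length (by simp [length_replicate]; omega)
        have : (replicate k false).getLast? = some true := by
          rw [heq, ← cons_append, getLast?_concat]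
        rw [show k = (k-1) + 1 by omega, replicate_succ', getLast?_concat] at this
        simp at this
      · intro h
        have h1 := h.sublist.length_le
        simp only [length_replicate] at h1
        rw [hlen] at h1
        have hjk : j = k := le_antisymm hj h1
        have heq : replicate k true = false :: (u ++ [true]) :=
          h.sublist.eq_of_length (by simp [length_replicate]; omega)
        have : (replicate k true).head? = some false := by rw [heq]; simp
        rw [show k = (k-1) + 1 by omega, replicate_succ, head?_cons] at this
        simp at this
      · rw [show false :: (u ++ [true]) = (false :: u) ++ [true] by simp, getLast?_concat]
        simp
  rw [hset, Set.ncard_image_of_injective _ ?_, ncard_len]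
  intro a b h
  simp only [cons.injEq, append_cancel_right_eq] at h
  exact h.2

lemma fiber_card {k n h lo hi : ℕ}
    (hchar : ∀ a b : ℕ,
      ((((1 ≤ a ∧ a ≤ k - 1) ∧ 1 ≤ b ∧ b ≤ k - 1) ∧ a + b ≤ n) ∧ a + b = h) ↔
        (lo ≤ a ∧ a ≤ hi ∧ b = h - a)) :
    ((Dset k n).filter (fun p => p.1 + p.2 = h)).card = hi + 1 - lo := by
  have himg : (Dset k n).filter (fun p => p.1 + p.2 = h)
      = (Finset.Icc lo hi).image (fun a => (a, h - a)) := by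
    ext ⟨a, b⟩
    simp only [Dset, Finset.mem_filter, Finset.mem_product, Finset.mem_Icc, Finset.mem_image,
      Prod.mk.injEq]
    constructor
    · intro hmem
      obtain ⟨c1, c2, c3⟩ := (hchar a b).mp hmem
      exact ⟨a, ⟨c1, c2⟩, rfl, c3.symm⟩
    · rintro ⟨a', ⟨hlo, hhi⟩, rfl, rfl⟩
      exact (hchar a' (h - a')).mpr ⟨hlo, hhi, rfl⟩
  rw [himg, Finset.card_image_of_injective, Nat.card_Icc]
  intro a b hab
  simpa using (Prod.mk.injEq _ _ _ _ ▸ hab).1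

lemma fiber_card_zero {k n h : ℕ} (hhn : n < h) :
    ((Dset k n).filter (fun p => p.1 + p.2 = h)).card = 0 := by
  rw [Finset.card_eq_zero, Finset.filter_eq_empty_iff]
  rintro ⟨a, b⟩ hp
  simp only [Dset, Finset.mem_filter] at hp
  omega

lemma final_rec {k : ℕ} (hk : 3 ≤ k) :
    ∀ n : ℤ, (k : ℤ) + 1 ≤ n →
      rZ k n = ∑ h ∈ Finset.Icc 2 k, ((h : ℤ) - 1) * rZ k (n - h)
             + ∑ h ∈ Finset.Icc (k + 1) (2*k - 2), (2*(k : ℤ) - h - 1) * rZ k (n - h) := by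
  intro n hn
  have hn0 : 0 ≤ n := by omega
  obtain ⟨N, hNn⟩ : ∃ N : ℕ, (N : ℤ) = n := ⟨n.toNat, Int.toNat_of_nonneg hn0⟩
  have hNk : k + 1 ≤ N := by omega
  have hrz : rZ k n = (rcount k N : ℤ) := by
    rw [rZ, if_neg (by omega), show n.toNat = N by omega]
  have hrec : rcount k N = ∑ h ∈ Finset.Icc 2 (2*k-2),
      ((Dset k N).filter (fun p => p.1 + p.2 = h)).card * rcount k (N - h) := by
    rw [rcount_rec hk (by omega)]
    rw [← Finset.sum_fiberwise_of_maps_to (g := fun p : ℕ × ℕ => p.1 + p.2)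
      (t := Finset.Icc 2 (2*k-2)) ?_ (fun p => rcount k (N - p.1 - p.2))]
    · refine Finset.sum_congr rfl (fun h _ => ?_)
      rw [Finset.sum_congr rfl (fun p hp => ?_), Finset.sum_const, smul_eq_mul]
      have hp' : p.1 + p.2 = h := (Finset.mem_filter.mp hp).2
      rw [show N - p.1 - p.2 = N - h by omega]
    · rintro ⟨a, b⟩ hp
      simp only [Dset, Finset.mem_filter, Finset.mem_product, Finset.mem_Icc] at hp
      simp only [Finset.mem_Icc]
      omega
  rw [hrz, hrec]
  push_cast
  have hsplit : ∀ f : ℕ → ℤ, ∑ h ∈ Finset.Icc 2 (2*k-2), f h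
      = ∑ h ∈ Finset.Icc 2 k, f h + ∑ h ∈ Finset.Icc (k+1) (2*k-2), f h := by
    intro f
    rw [show Finset.Icc 2 (2*k-2) = Finset.Ioc 1 (2*k-2) by rw [← Finset.Icc_add_one_left_eq_Ioc]; rfl,
        show Finset.Icc 2 k = Finset.Ioc 1 k by rw [← Finset.Icc_add_one_left_eq_Ioc]; rfl,
        show Finset.Icc (k+1) (2*k-2) = Finset.Ioc k (2*k-2) by rw [← Finset.Icc_add_one_left_eq_Ioc],
        ← Finset.sum_Ioc_consecutive _ (by omega : 1 ≤ k) (by omega : k ≤ 2*k-2)]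
  rw [hsplit]
  congr 1
  · refine Finset.sum_congr rfl (fun h hh => ?_)
    simp only [Finset.mem_Icc] at hh
    have hcard : ((Dset k N).filter (fun p => p.1 + p.2 = h)).card = h - 1 := by
      rw [fiber_card (lo := 1) (hi := h - 1) (fun a b => by constructor <;> intro <;> omega)]
      omega
    rw [hcard, rZ, if_neg (by omega)]
    rw [show (n - (h:ℤ)).toNat = N - h by omega]
    rw [show ((h - 1 : ℕ) : ℤ) = (h : ℤ) - 1 by omega]
  · refine Finset.sum_congr rfl (fun h hh => ?_)
    simp only [Finset.mem_Icc] at hh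
    by_cases hcase : h ≤ N
    · have hcard : ((Dset k N).filter (fun p => p.1 + p.2 = h)).card = 2*k-1-h := by
        rw [fiber_card (lo := h + 1 - k) (hi := k - 1)
          (fun a b => by constructor <;> intro <;> omega)]
        omega
      rw [hcard, rZ, if_neg (by omega)]
      rw [show (n - (h:ℤ)).toNat = N - h by omega]
      rw [show ((2*k-1-h : ℕ) : ℤ) = 2*(k:ℤ) - h - 1 by omega]
    · rw [fiber_card_zero (by omega), rZ, if_pos (by omega)]
      push_cast
      ring

end Aux

/-- Initial values and the first recurrence for `r_n^(k)`. -/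
theorem rcount_recurrence (k : ℕ) (hk : 3 ≤ k) :
    rZ k 0 = 1 ∧ rZ k 1 = 0 ∧
    (∀ j : ℕ, 2 ≤ j → j ≤ k → rZ k j = 2 ^ (j - 2)) ∧
    (∀ n : ℤ, (k : ℤ) + 1 ≤ n →
      rZ k n = ∑ h ∈ Finset.Icc 2 k, ((h : ℤ) - 1) * rZ k (n - h)
             + ∑ h ∈ Finset.Icc (k + 1) (2*k - 2), (2*(k : ℤ) - h - 1) * rZ k (n - h)) := by
  refine ⟨?_, ?_, ?_, final_rec hk⟩
  · rw [rZ, if_neg (by omega)]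
    norm_num [rcount_zero hk]
  · rw [rZ, if_neg (by omega)]
    norm_num [rcount_one hk]
  · intro j h2 hj
    rw [rZ, if_neg (by push_cast; omega), Int.toNat_natCast, rcount_small hk h2 hj]
    push_cast
    ring
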